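/- arXiv:1707.09351 — 2 statements merged into one kernel-verified Lean document; each statement's English description precedes it below -/
import Mathlib

section
/- Let α > 0 and π_0(H) := -(1/α)·log E[exp(-αH)]. Let (Hⁿ) and (ηⁿ) be sequences of random variables, uniformly bounded in sup-norm, with ηⁿ ≤ 0 almost surely for every n. If π_0(Hⁿ + ηⁿ) - π_0(Hⁿ) → 0 as n → ∞, then ηⁿ → 0 in probability. -/
open MeasureTheory Filter

private lemma int_exp8 {Ω : Type*} [MeasurableSpace Ω] (P : Measure Ω) [IsProbabilityMeasure P]
    {f : Ω → ℝ} (hf : Measurable f) {K : ℝ} (hK : ∀ ω, f ω ≤ K) :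
    Integrable (fun ω => Real.exp (f ω)) P := by
  apply Integrable.mono' (integrable_const (Real.exp K)) hf.exp.aestronglyMeasurable
  filter_upwards with ω
  rw [Real.norm_eq_abs, abs_of_nonneg (Real.exp_nonneg _)]
  exact Real.exp_le_exp.mpr (hK ω)

theorem stmt8 {Ω : Type*} [MeasurableSpace Ω] (P : Measure Ω) [IsProbabilityMeasure P]
    (α : ℝ) (hα : 0 < α)
    (Hn ηn : ℕ → Ω → ℝ) (hHn : ∀ n, Measurable (Hn n)) (hηn : ∀ n, Measurable (ηn n))
    (C : ℝ) (hHb : ∀ n ω, |Hn n ω| ≤ C) (hηb : ∀ n ω, |ηn n ω| ≤ C)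
    (hηneg : ∀ n, ∀ᵐ ω ∂P, ηn n ω ≤ 0)
    (hconv : Tendsto (fun n =>
        (-(1/α) * Real.log (∫ ω, Real.exp (-α * (Hn n ω + ηn n ω)) ∂P))
          - (-(1/α) * Real.log (∫ ω, Real.exp (-α * Hn n ω) ∂P))) atTop (nhds 0)) :
    TendstoInMeasure P ηn atTop (fun _ => (0:ℝ)) := by
  set A : ℕ → ℝ := fun n => ∫ ω, Real.exp (-α * Hn n ω) ∂P with hAdef
  set B : ℕ → ℝ := fun n => ∫ ω, Real.exp (-α * (Hn n ω + ηn n ω)) ∂P with hBdef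
  -- integrability
  have hAint : ∀ n, Integrable (fun ω => Real.exp (-α * Hn n ω)) P := by
    intro n
    refine int_exp8 P ((hHn n).const_mul (-α)) (K := α * C) ?_
    · intro ω
      calc -α * Hn n ω ≤ |(-α) * Hn n ω| := le_abs_self _
        _ = α * |Hn n ω| := by rw [abs_mul, abs_neg, abs_of_pos hα]
        _ ≤ α * C := by nlinarith [hHb n ω, abs_nonneg (Hn n ω)]
  have hBint : ∀ n, Integrable (fun ω => Real.exp (-α * (Hn n ω + ηn n ω))) P := by
    intro n
    refine int_exp8 P (((hHn n).add (hηn n)).const_mul (-α)) (K := α * (2*C)) ?_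
    · intro ω
      have h1 := hHb n ω; have h2 := hηb n ω
      calc -α * (Hn n ω + ηn n ω) ≤ |(-α) * (Hn n ω + ηn n ω)| := le_abs_self _
        _ = α * |Hn n ω + ηn n ω| := by rw [abs_mul, abs_neg, abs_of_pos hα]
        _ ≤ α * (2*C) := by
            have := abs_add_le (Hn n ω) (ηn n ω)
            nlinarith [abs_nonneg (Hn n ω + ηn n ω)]
  -- bounds on A
  have hAlb : ∀ n, Real.exp (-(α*C)) ≤ A n := by
    intro n
    have : ∫ (_ : Ω), Real.exp (-(α*C)) ∂P ≤ A n := by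
      refine integral_mono (integrable_const _) (hAint n) fun ω => ?_
      refine Real.exp_le_exp.mpr ?_
      have := hHb n ω
      have := abs_le.mp this
      nlinarith
    simpa using this
  have hAub : ∀ n, A n ≤ Real.exp (α*C) := by
    intro n
    have : A n ≤ ∫ (_ : Ω), Real.exp (α*C) ∂P := by
      refine integral_mono (hAint n) (integrable_const _) fun ω => ?_
      refine Real.exp_le_exp.mpr ?_
      have := abs_le.mp (hHb n ω)
      nlinarith
    simpa using this
  have hApos : ∀ n, 0 < A n := fun n => lt_of_lt_of_le (Real.exp_pos _) (hAlb n)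
  -- B ≥ A
  have hBA : ∀ n, A n ≤ B n := by
    intro n
    refine integral_mono_ae (hAint n) (hBint n) ?_
    filter_upwards [hηneg n] with ω hω
    refine Real.exp_le_exp.mpr ?_
    nlinarith
  have hBpos : ∀ n, 0 < B n := fun n => lt_of_lt_of_le (hApos n) (hBA n)
  -- d n := log B - log A → 0
  set d : ℕ → ℝ := fun n => Real.log (B n) - Real.log (A n) with hddef
  have hdnonneg : ∀ n, 0 ≤ d n := fun n =>
    sub_nonneg.mpr (Real.log_le_log (hApos n) (hBA n))
  have hd0 : Tendsto d atTop (nhds 0) := by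
    have h := hconv.const_mul (-α)
    rw [mul_zero] at h
    refine h.congr fun n => ?_
    show -α * (-(1/α) * Real.log (B n) - -(1/α) * Real.log (A n)) = d n
    rw [hddef]
    field_simp
    ring
  -- B n - A n → 0
  have hBAsub : Tendsto (fun n => B n - A n) atTop (nhds 0) := by
    have hBeq : ∀ n, B n = A n * Real.exp (d n) := by
      intro n
      rw [hddef, Real.exp_sub, Real.exp_log (hBpos n), Real.exp_log (hApos n),
        mul_comm, div_mul_cancel₀ _ (hApos n).ne']
    have hub : ∀ n, B n - A n ≤ Real.exp (α*C) * (Real.exp (d n) - 1) := by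
      intro n
      rw [hBeq n]
      have h1 : (0:ℝ) ≤ Real.exp (d n) - 1 := by
        have := Real.one_le_exp (hdnonneg n)
        linarith
      have := hAub n
      nlinarith [hApos n]
    have hrhs : Tendsto (fun n => Real.exp (α*C) * (Real.exp (d n) - 1)) atTop (nhds 0) := by
      have : Tendsto (fun n => Real.exp (d n) - 1) atTop (nhds 0) := by
        have := (Real.continuous_exp.tendsto 0).comp hd0
        simpa using this.sub (tendsto_const_nhds (x := (1:ℝ)))
      simpa using this.const_mul (Real.exp (α*C))
    exact squeeze_zero (fun n => sub_nonneg.mpr (hBA n)) hub hrhs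
  -- I n := ∫ (exp(-α η) - 1) → 0
  set I : ℕ → ℝ := fun n => ∫ ω, (Real.exp (-α * ηn n ω) - 1) ∂P with hIdef
  have hηint : ∀ n, Integrable (fun ω => Real.exp (-α * ηn n ω)) P := by
    intro n
    refine int_exp8 P ((hηn n).const_mul (-α)) (K := α * C) ?_
    intro ω
    calc -α * ηn n ω ≤ |(-α) * ηn n ω| := le_abs_self _
      _ = α * |ηn n ω| := by rw [abs_mul, abs_neg, abs_of_pos hα]
      _ ≤ α * C := by nlinarith [hηb n ω, abs_nonneg (ηn n ω)]
  have hIint : ∀ n, Integrable (fun ω => Real.exp (-α * ηn n ω) - 1) P :=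
    fun n => (hηint n).sub (integrable_const 1)
  have hInonneg_ae : ∀ n, ∀ᵐ ω ∂P, 0 ≤ Real.exp (-α * ηn n ω) - 1 := by
    intro n
    filter_upwards [hηneg n] with ω hω
    have : (0:ℝ) ≤ -α * ηn n ω := by nlinarith
    have := Real.one_le_exp this
    linarith
  have hIub : ∀ n, I n ≤ Real.exp (α*C) * (B n - A n) := by
    intro n
    have key : I n ≤ ∫ ω, Real.exp (α*C) *
        (Real.exp (-α * (Hn n ω + ηn n ω)) - Real.exp (-α * Hn n ω)) ∂P := by
      refine integral_mono_ae (hIint n)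
        (((hBint n).sub (hAint n)).const_mul _) ?_
      filter_upwards [hηneg n] with ω hω
      have hsplit : Real.exp (-α * (Hn n ω + ηn n ω))
          = Real.exp (-α * Hn n ω) * Real.exp (-α * ηn n ω) := by
        rw [← Real.exp_add]; ring_nf
      have hfac : Real.exp (α*C) * Real.exp (-α * Hn n ω) = Real.exp (α*C - α*Hn n ω) := by
        rw [← Real.exp_add]; ring_nf
      have h1 : (1:ℝ) ≤ Real.exp (α*C) * Real.exp (-α * Hn n ω) := by
        rw [hfac]
        refine Real.one_le_exp ?_
        have := abs_le.mp (hHb n ω)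
        nlinarith
      have h2 : (0:ℝ) ≤ Real.exp (-α * ηn n ω) - 1 := by
        have : (0:ℝ) ≤ -α * ηn n ω := by nlinarith
        have := Real.one_le_exp this
        linarith
      calc Real.exp (-α * ηn n ω) - 1
          ≤ (Real.exp (α*C) * Real.exp (-α * Hn n ω)) * (Real.exp (-α * ηn n ω) - 1) :=
            le_mul_of_one_le_left h2 h1
        _ = Real.exp (α*C) * (Real.exp (-α * (Hn n ω + ηn n ω)) - Real.exp (-α * Hn n ω)) := by
            rw [hsplit]; ring
    calc I n ≤ _ := key
      _ = Real.exp (α*C) * (B n - A n) := by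
          rw [integral_const_mul, integral_sub (hBint n) (hAint n)]
  have hI0 : Tendsto I atTop (nhds 0) := by
    refine squeeze_zero (fun n => integral_nonneg_of_ae (hInonneg_ae n)) hIub ?_
    simpa using hBAsub.const_mul (Real.exp (α*C))
  -- Markov / conclusion
  rw [tendstoInMeasure_iff_dist]
  intro ε hε
  set δ : ℝ := Real.exp (α*ε) - 1 with hδdef
  have hδpos : 0 < δ := by
    have : Real.exp 0 < Real.exp (α*ε) := Real.exp_lt_exp.mpr (by positivity)
    rw [Real.exp_zero] at this
    linarith
  have hmeas_le : ∀ n, P {ω | ε ≤ dist (ηn n ω) 0}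
      ≤ P {ω | δ ≤ Real.exp (-α * ηn n ω) - 1} := by
    intro n
    refine measure_mono_ae ?_
    filter_upwards [hηneg n] with ω hω hmem
    simp only [Set.mem_setOf_eq, Real.dist_eq, sub_zero] at hmem ⊢
    replace hmem : ε ≤ |ηn n ω| := hmem
    rw [abs_of_nonpos hω] at hmem
    have h1 : α * ε ≤ -α * ηn n ω := by nlinarith
    have h2 := Real.exp_le_exp.mpr h1
    exact sub_le_sub_right h2 1
  have hmarkov : ∀ n, δ * (P {ω | δ ≤ Real.exp (-α * ηn n ω) - 1}).toReal ≤ I n :=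
    fun n => mul_meas_ge_le_integral_of_nonneg (hInonneg_ae n) (hIint n) δ
  have htoReal : Tendsto (fun n => (P {ω | ε ≤ dist (ηn n ω) 0}).toReal) atTop (nhds 0) := by
    refine squeeze_zero (fun n => ENNReal.toReal_nonneg) (g := fun n => I n / δ) (fun n => ?_) ?_
    · have h1 : (P {ω | ε ≤ dist (ηn n ω) 0}).toReal
          ≤ (P {ω | δ ≤ Real.exp (-α * ηn n ω) - 1}).toReal :=
        ENNReal.toReal_mono (measure_ne_top _ _) (hmeas_le n)
      have h2 := hmarkov n
      rw [le_div_iff₀ hδpos]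
      nlinarith [ENNReal.toReal_nonneg (a := P {ω | δ ≤ Real.exp (-α * ηn n ω) - 1})]
    · simpa using hI0.div_const δ
  exact (ENNReal.tendsto_toReal_iff (fun n => measure_ne_top P _)
    (x := (0 : ENNReal)) (by simp)).mp (by rw [ENNReal.toReal_zero]; exact htoReal)
end

section
/- Let (Ω, F, (F_t)_{t∈[0,T]}, P) be a filtered probability space and let (π_t)_{t∈[0,T]} be a family of maps from bounded random variables to bounded F_t-measurable random variables satisfying: monotonicity (H¹ ≤ H² ⟹ π_t(H¹) ≤ π_t(H²) a.s.), translation invariance (π_t(H + x) = π_t(H) + x a.s. for bounded F_t-measurable x), the local property (π_t(H¹1_Λ + H²1_{Λᶜ}) = 1_Λ π_t(H¹) + 1_{Λᶜ} π_t(H²) a.s. for Λ ∈ F_t), and time consistency (π_t(π_s(H)) = π_t(H) a.s. for t ≤ s). Let V = (V_t) be a bounded adapted process such that π_t(V_s) ≤ V_t a.s. for all deterministic 0 ≤ t ≤ s ≤ T. Then for every stopping time τ taking finitely many values in [t, T]: π_t(V_τ) ≤ V_t almost surely. -/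
open MeasureTheory

theorem stmt17 {Ω : Type*} {mΩ : MeasurableSpace Ω} {P : Measure Ω} [IsProbabilityMeasure P]
    (F : Filtration ℝ mΩ) (T : ℝ)
    (π : ℝ → (Ω → ℝ) → (Ω → ℝ))
    (hπmeas : ∀ t (H : Ω → ℝ), StronglyMeasurable[F t] (π t H))
    (hπbdd : ∀ t (H : Ω → ℝ), (∃ c, ∀ ω, |H ω| ≤ c) → ∃ c, ∀ ω, |π t H ω| ≤ c)
    (hmono : ∀ t (H1 H2 : Ω → ℝ), H1 ≤ᵐ[P] H2 → π t H1 ≤ᵐ[P] π t H2)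
    (htrans : ∀ t (H x : Ω → ℝ), StronglyMeasurable[F t] x → (∃ c, ∀ ω, |x ω| ≤ c) →
      π t (fun ω => H ω + x ω) =ᵐ[P] fun ω => π t H ω + x ω)
    (hlocal : ∀ t (H1 H2 : Ω → ℝ) (Λ : Set Ω), MeasurableSet[F t] Λ →
      π t (fun ω => Set.indicator Λ H1 ω + Set.indicator Λᶜ H2 ω)
        =ᵐ[P] fun ω => Set.indicator Λ (π t H1) ω + Set.indicator Λᶜ (π t H2) ω)
    (htc : ∀ t s : ℝ, t ≤ s → ∀ H : Ω → ℝ, π t (π s H) =ᵐ[P] π t H)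
    (V : ℝ → Ω → ℝ)
    (hVadapted : ∀ t, StronglyMeasurable[F t] (V t))
    (hVbdd : ∃ c, ∀ t ω, |V t ω| ≤ c)
    (hVsuper : ∀ t s : ℝ, 0 ≤ t → t ≤ s → s ≤ T → π t (V s) ≤ᵐ[P] V t)
    (t : ℝ) (ht : 0 ≤ t) (htT : t ≤ T)
    (τ : Ω → ℝ) (hτ : IsStoppingTime F (fun ω => (τ ω : WithTop ℝ))) (hτfin : (Set.range τ).Finite)
    (hτmem : ∀ ω, τ ω ∈ Set.Icc t T) :
    π t (fun ω => V (τ ω) ω) ≤ᵐ[P] V t := by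
  have hΩ : Nonempty Ω := by
    by_contra h
    rw [not_nonempty_iff] at h
    have h1 := IsProbabilityMeasure.measure_univ (μ := P)
    rw [Set.univ_eq_empty_iff.2 h] at h1
    simp at h1
  obtain ⟨n, hn⟩ : ∃ n, (Set.range τ).ncard ≤ n := ⟨_, le_refl _⟩
  induction n generalizing t τ with
  | zero =>
    have hne : (Set.range τ).Nonempty := Set.range_nonempty τ
    rw [Nat.le_zero, Set.ncard_eq_zero hτfin] at hn
    exact absurd hn hne.ne_empty
  | succ n IH =>
    have hne : (Set.range τ).Nonempty := Set.range_nonempty τ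
    set S : Finset ℝ := hτfin.toFinset with hS
    have hSne : S.Nonempty := by rwa [hS, Set.Finite.toFinset_nonempty]
    set t₁ : ℝ := S.min' hSne with ht₁
    have ht₁mem : t₁ ∈ Set.range τ := hτfin.mem_toFinset.mp (S.min'_mem hSne)
    obtain ⟨ω₁, hω₁⟩ := ht₁mem
    have ht₁mem : t₁ ∈ Set.range τ := ⟨ω₁, hω₁⟩
    have ht₁Icc : t₁ ∈ Set.Icc t T := hω₁ ▸ hτmem ω₁
    have ht₁min : ∀ s ∈ Set.range τ, t₁ ≤ s := fun s hs =>
      S.min'_le s (by rwa [hS, Set.Finite.mem_toFinset])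
    have ht₁0 : 0 ≤ t₁ := le_trans ht ht₁Icc.1
    by_cases hone : ∀ ω, τ ω = t₁
    · have heq : (fun ω => V (τ ω) ω) = V t₁ := funext fun ω => by rw [hone ω]
      rw [heq]
      exact hVsuper t t₁ ht ht₁Icc.1 ht₁Icc.2
    · push_neg at hone
      obtain ⟨ω₂, hω₂⟩ := hone
      have hS'ne : (S.erase t₁).Nonempty :=
        ⟨τ ω₂, Finset.mem_erase.2 ⟨hω₂, by rw [hS, Set.Finite.mem_toFinset]; exact ⟨ω₂, rfl⟩⟩⟩
      set m : ℝ := (S.erase t₁).min' hS'ne with hm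
      have hmmem := (S.erase t₁).min'_mem hS'ne
      rw [Finset.mem_erase] at hmmem
      have hmrange : m ∈ Set.range τ := hτfin.mem_toFinset.mp hmmem.2
      have ht₁m : t₁ < m := lt_of_le_of_ne (ht₁min m hmrange) (Ne.symm hmmem.1)
      have hmmin : ∀ s ∈ Set.range τ, s ≠ t₁ → m ≤ s := fun s hs hne' =>
        Finset.min'_le _ s (Finset.mem_erase.2 ⟨hne', by rwa [hS, Set.Finite.mem_toFinset]⟩)
      set τ' : Ω → ℝ := fun ω => max (τ ω) m with hτ'def
      have hτ'st : IsStoppingTime F (fun ω => (τ' ω : WithTop ℝ)) := by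
        have e : (fun ω => (τ' ω : WithTop ℝ)) = fun ω => max (↑(τ ω) : WithTop ℝ) (↑m : WithTop ℝ) :=
          funext fun ω => WithTop.coe_max _ _
        rw [e]
        exact hτ.max_const m
      have hτ'eq : ∀ ω, τ ω ≠ t₁ → τ' ω = τ ω := fun ω h =>
        max_eq_left (hmmin _ ⟨ω, rfl⟩ h)
      have hτ'eq' : ∀ ω, τ ω = t₁ → τ' ω = m := fun ω h => by
        show max (τ ω) m = m
        rw [h]
        exact max_eq_right (le_of_lt ht₁m)
      have hτ'range : Set.range τ' ⊆ Set.range τ \ {t₁} := by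
        rintro _ ⟨ω, rfl⟩
        by_cases h : τ ω = t₁
        · rw [hτ'eq' ω h]; exact ⟨hmrange, hmmem.1⟩
        · rw [hτ'eq ω h]; exact ⟨⟨ω, rfl⟩, h⟩
      have hτ'fin : (Set.range τ').Finite := (hτfin.diff (t := {t₁})).subset hτ'range
      have hτ'mem : ∀ ω, τ' ω ∈ Set.Icc t₁ T := by
        intro ω
        constructor
        · exact le_trans (le_of_lt ht₁m) (le_max_right _ _)
        · obtain ⟨⟨ω', hω'⟩, -⟩ := hτ'range ⟨ω, rfl⟩
          rw [← hω']
          exact (hτmem ω').2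
      have hcard : (Set.range τ').ncard ≤ n := by
        have h1 : (Set.range τ').ncard ≤ (Set.range τ \ {t₁}).ncard :=
          Set.ncard_le_ncard hτ'range (hτfin.diff (t := {t₁}))
        have h2 : (Set.range τ \ {t₁}).ncard < (Set.range τ).ncard :=
          Set.ncard_diff_singleton_lt_of_mem ht₁mem hτfin
        omega
      have hIH : π t₁ (fun ω => V (τ' ω) ω) ≤ᵐ[P] V t₁ :=
        IH t₁ ht₁0 ht₁Icc.2 τ' hτ'st hτ'fin hτ'mem hcard
      set Λ : Set Ω := {ω | τ ω = t₁} with hΛ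
      have hΛmeas : MeasurableSet[F t₁] Λ :=
        by
        have hc : (Set.range fun ω => (τ ω : WithTop ℝ)).Countable := by
          rw [show (fun ω => (τ ω : WithTop ℝ)) = ((↑) : ℝ → WithTop ℝ) ∘ τ from rfl, Set.range_comp]
          exact hτfin.countable.image _
        have e : Λ = {ω | (τ ω : WithTop ℝ) = (t₁ : WithTop ℝ)} := by
          ext ω
          exact ⟨fun h => congrArg (fun x : ℝ => (x : WithTop ℝ)) (show τ ω = t₁ from h), fun h => WithTop.coe_injective h⟩
        rw [e]
        exact hτ.measurableSet_eq_of_countable_range hc t₁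
      have hdecomp : (fun ω => V (τ ω) ω)
          = fun ω => Set.indicator Λ (V t₁) ω
              + Set.indicator Λᶜ (fun ω' => V (τ' ω') ω') ω := by
        funext ω
        by_cases h : ω ∈ Λ
        · have hτω : τ ω = t₁ := h
          rw [Set.indicator_of_mem h, Set.indicator_of_notMem (by simpa using h), hτω]
          ring
        · have hτω : τ ω ≠ t₁ := h
          rw [Set.indicator_of_notMem h, Set.indicator_of_mem (Set.mem_compl h),
            hτ'eq ω hτω]
          ring
      have hsup1 : π t₁ (V t₁) ≤ᵐ[P] V t₁ := hVsuper t₁ t₁ ht₁0 le_rfl ht₁Icc.2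
      have hloc := hlocal t₁ (V t₁) (fun ω => V (τ' ω) ω) Λ hΛmeas
      have hkey : π t₁ (fun ω => V (τ ω) ω) ≤ᵐ[P] V t₁ := by
        rw [hdecomp]
        filter_upwards [hloc, hIH, hsup1] with ω h1 h2 h3
        rw [h1]
        by_cases h : ω ∈ Λ
        · rw [Set.indicator_of_mem h, Set.indicator_of_notMem (by simpa using h)]
          simpa using h3
        · rw [Set.indicator_of_notMem h, Set.indicator_of_mem (Set.mem_compl h)]
          simpa using h2
      have htc' := htc t t₁ ht₁Icc.1 (fun ω => V (τ ω) ω)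
      have hmono' := hmono t (π t₁ (fun ω => V (τ ω) ω)) (V t₁) hkey
      have hfin := hVsuper t t₁ ht ht₁Icc.1 ht₁Icc.2
      filter_upwards [htc', hmono', hfin] with ω h1 h2 h3
      rw [← h1]
      exact le_trans h2 h3
end
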